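/- Let p be a Mersenne prime and let T = PSL(2,p) act on the set Ω of right cosets of a subgroup H with C_p ⋊ C_r ≤ H ≤ C_p ⋊ C_{(p-1)/2}, where r is the product of the distinct prime divisors of (p-1)/2. Then H meets every conjugacy class of elements of odd prime order in T; equivalently, T has no derangement of odd prime order on Ω. -/

import Mathlib

set_option maxRecDepth 10000
set_option maxHeartbeats 1000000

open scoped MatrixGroups
open scoped Pointwise

namespace Stmt12Aux

variable (p : ℕ) [Fact p.Prime]

abbrev SL2 (p : ℕ) [Fact p.Prime] := Matrix.SpecialLinearGroup (Fin 2) (ZMod p)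

/-- The diagonal torus homomorphism into `SL(2,p)`. -/
def dtorus : (ZMod p)ˣ →* SL2 p where
  toFun u := ⟨Matrix.diagonal ![(u : ZMod p), ((u⁻¹ : (ZMod p)ˣ) : ZMod p)], by
    rw [Matrix.det_diagonal, Fin.prod_univ_two]
    show (u : ZMod p) * ((u⁻¹ : (ZMod p)ˣ) : ZMod p) = 1
    rw [← Units.val_mul, mul_inv_cancel, Units.val_one]⟩
  map_one' := by
    apply Subtype.ext
    show Matrix.diagonal _ = _
    rw [show ![((1 : (ZMod p)ˣ) : ZMod p), (((1 : (ZMod p)ˣ)⁻¹ : (ZMod p)ˣ) : ZMod p)]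
        = fun _ => (1 : ZMod p) by funext i; fin_cases i <;> simp]
    exact Matrix.diagonal_one
  map_mul' u v := by
    apply Subtype.ext
    show Matrix.diagonal _ = Matrix.diagonal _ * Matrix.diagonal _
    rw [Matrix.diagonal_mul_diagonal]
    have hv : ![((u * v : (ZMod p)ˣ) : ZMod p), (((u * v)⁻¹ : (ZMod p)ˣ) : ZMod p)]
        = fun i => ![(u : ZMod p), ((u⁻¹ : (ZMod p)ˣ) : ZMod p)] i
            * ![(v : ZMod p), ((v⁻¹ : (ZMod p)ˣ) : ZMod p)] i := by
      funext i
      fin_cases i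
      · show ((u * v : (ZMod p)ˣ) : ZMod p) = (u : ZMod p) * (v : ZMod p)
        rw [Units.val_mul]
      · show (((u * v)⁻¹ : (ZMod p)ˣ) : ZMod p)
          = ((u⁻¹ : (ZMod p)ˣ) : ZMod p) * ((v⁻¹ : (ZMod p)ˣ) : ZMod p)
        rw [mul_inv, Units.val_mul, mul_comm]
    rw [hv]

end Stmt12Aux

namespace Stmt12Aux

variable (p : ℕ) [Fact p.Prime]

@[simp] lemma dtorus_coe (u : (ZMod p)ˣ) :
    ((dtorus p u : SL2 p) : Matrix (Fin 2) (Fin 2) (ZMod p))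
      = Matrix.diagonal ![(u : ZMod p), ((u⁻¹ : (ZMod p)ˣ) : ZMod p)] := rfl

def phi : (ZMod p)ˣ →* PSL(2, ZMod p) :=
  (QuotientGroup.mk' (Subgroup.center (SL2 p))).comp (dtorus p)

lemma mem_center_iff' {A : SL2 p} :
    A ∈ Subgroup.center (SL2 p) ↔ ∃ r : ZMod p, r ^ 2 = 1 ∧ Matrix.scalar (Fin 2) r = A := by
  rw [Matrix.SpecialLinearGroup.mem_center_iff]
  simp

lemma neg_one_sq_eq (r : ZMod p) (hr : r ^ 2 = 1) : r = 1 ∨ r = -1 :=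
  mul_self_eq_one_iff.mp (by rw [show r * r = r ^ 2 by ring]; exact hr)

lemma neg_one_ne_one' (hp2 : p ≠ 2) : (-1 : (ZMod p)ˣ) ≠ 1 := by
  intro h
  have h2 : (-1 : ZMod p) = 1 := by
    have := congrArg (Units.val) h
    simpa using this
  have h3 : ((2 : ℕ) : ZMod p) = 0 := by push_cast; linear_combination -h2
  rw [ZMod.natCast_eq_zero_iff] at h3
  have := (Nat.prime_dvd_prime_iff_eq (Fact.out) (by norm_num)).mp h3
  exact hp2 this

lemma orderOf_neg_one' (hp2 : p ≠ 2) : orderOf (-1 : (ZMod p)ˣ) = 2 := by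
  apply orderOf_eq_prime
  · simp
  · exact neg_one_ne_one' p hp2

lemma dtorus_neg_one_mem_center :
    dtorus p (-1) ∈ Subgroup.center (SL2 p) := by
  rw [mem_center_iff']
  refine ⟨-1, by ring, ?_⟩
  rw [dtorus_coe, Matrix.scalar_apply, Matrix.diagonal_eq_diagonal_iff]
  intro i
  fin_cases i <;> simp

lemma ker_phi : (phi p).ker = Subgroup.zpowers (-1 : (ZMod p)ˣ) := by
  ext u
  constructor
  · intro hu
    have h1 : dtorus p u ∈ Subgroup.center (SL2 p) := by
      rw [MonoidHom.mem_ker] at hu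
      have h : (QuotientGroup.mk' (Subgroup.center (SL2 p))) (dtorus p u) = 1 := hu
      rwa [← MonoidHom.mem_ker, QuotientGroup.ker_mk'] at h
    obtain ⟨r, hr1, hr2⟩ := (mem_center_iff' p).mp h1
    rw [dtorus_coe, Matrix.scalar_apply, Matrix.diagonal_eq_diagonal_iff] at hr2
    have h00 : r = (u : ZMod p) := by
      have h := hr2 0
      rwa [Matrix.cons_val_zero] at h
    have h11 : r = ((u⁻¹ : (ZMod p)ˣ) : ZMod p) := by
      have h := hr2 1
      rwa [Matrix.cons_val_one, Matrix.cons_val_zero] at h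
    have huu : u = u⁻¹ := Units.ext (h00.symm.trans h11)
    have hu2 : u ^ 2 = 1 := by
      rw [sq]
      nth_rewrite 2 [huu]
      exact mul_inv_cancel u
    have hv : (u : ZMod p) ^ 2 = 1 := by
      have h := congrArg Units.val hu2
      push_cast at h
      exact h
    rcases neg_one_sq_eq p _ hv with h | h
    · have h' : u = 1 := Units.ext (by simpa using h)
      rw [h']
      exact one_mem _
    · have h' : u = -1 := Units.ext (by simpa using h)
      rw [h']
      exact Subgroup.mem_zpowers _
  · intro hu
    obtain ⟨k, rfl⟩ := hu
    rw [MonoidHom.mem_ker, map_zpow]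
    suffices h : phi p (-1) = 1 by rw [h, one_zpow]
    show (QuotientGroup.mk' (Subgroup.center (SL2 p))) (dtorus p (-1)) = 1
    rw [← MonoidHom.mem_ker, QuotientGroup.ker_mk']
    exact dtorus_neg_one_mem_center p

end Stmt12Aux

namespace Stmt12Aux

variable (p : ℕ) [Fact p.Prime]

lemma card_ker_phi (hp2 : p ≠ 2) : Nat.card ((phi p).ker) = 2 := by
  rw [ker_phi, Nat.card_zpowers, orderOf_neg_one' p hp2]

lemma scalar_neg_one_eq : (Matrix.scalar (Fin 2)) (-1 : ZMod p)
    = ((dtorus p (-1) : SL2 p) : Matrix (Fin 2) (Fin 2) (ZMod p)) := by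
  rw [dtorus_coe, Matrix.scalar_apply, Matrix.diagonal_eq_diagonal_iff]
  intro i
  fin_cases i <;> simp

lemma center_eq : Subgroup.center (SL2 p) = Subgroup.zpowers (dtorus p (-1)) := by
  apply le_antisymm
  · intro A hA
    obtain ⟨r, hr1, hr2⟩ := (mem_center_iff' p).mp hA
    rcases neg_one_sq_eq p r hr1 with h | h
    · have hA1 : A = 1 := by
        apply Subtype.ext
        rw [← hr2, h, map_one]
        rfl
      rw [hA1]
      exact one_mem _
    · have hA1 : A = dtorus p (-1) := by
        apply Subtype.ext
        rw [← hr2, h, scalar_neg_one_eq]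
      rw [hA1]
      exact Subgroup.mem_zpowers _
  · exact Subgroup.zpowers_le.mpr (dtorus_neg_one_mem_center p)

lemma dtorus_inj : Function.Injective (dtorus p) := by
  intro u v h
  have h0 : ((dtorus p u : SL2 p) : Matrix (Fin 2) (Fin 2) (ZMod p)) 0 0
      = ((dtorus p v : SL2 p) : Matrix (Fin 2) (Fin 2) (ZMod p)) 0 0 := by rw [h]
  rw [dtorus_coe, dtorus_coe, Matrix.diagonal_apply_eq, Matrix.diagonal_apply_eq,
    Matrix.cons_val_zero, Matrix.cons_val_zero] at h0
  exact Units.ext h0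

lemma card_center' (hp2 : p ≠ 2) : Nat.card (Subgroup.center (SL2 p)) = 2 := by
  rw [center_eq, Nat.card_zpowers, orderOf_injective (dtorus p) (dtorus_inj p),
    orderOf_neg_one' p hp2]

lemma card_psl_mul (hp2 : p ≠ 2) :
    Nat.card (SL2 p) = Nat.card (PSL(2, ZMod p)) * 2 := by
  have h := Subgroup.card_eq_card_quotient_mul_card_subgroup (Subgroup.center (SL2 p))
  rwa [card_center' p hp2] at h

def diagGL (u : (ZMod p)ˣ) : GL (Fin 2) (ZMod p) where
  val := Matrix.diagonal ![(u : ZMod p), 1]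
  inv := Matrix.diagonal ![((u⁻¹ : (ZMod p)ˣ) : ZMod p), 1]
  val_inv := by
    rw [Matrix.diagonal_mul_diagonal]
    have h : (fun i => ![(u : ZMod p), 1] i * ![((u⁻¹ : (ZMod p)ˣ) : ZMod p), 1] i)
        = fun _ => (1 : ZMod p) := by
      funext i
      fin_cases i
      · show (u : ZMod p) * ((u⁻¹ : (ZMod p)ˣ) : ZMod p) = 1
        rw [← Units.val_mul, mul_inv_cancel, Units.val_one]
      · show (1 : ZMod p) * 1 = 1
        rw [one_mul]
    rw [h, Matrix.diagonal_one]
  inv_val := by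
    rw [Matrix.diagonal_mul_diagonal]
    have h : (fun i => ![((u⁻¹ : (ZMod p)ˣ) : ZMod p), 1] i * ![(u : ZMod p), 1] i)
        = fun _ => (1 : ZMod p) := by
      funext i
      fin_cases i
      · show ((u⁻¹ : (ZMod p)ˣ) : ZMod p) * (u : ZMod p) = 1
        rw [← Units.val_mul, inv_mul_cancel, Units.val_one]
      · show (1 : ZMod p) * 1 = 1
        rw [one_mul]
    rw [h, Matrix.diagonal_one]

lemma det_surj : Function.Surjective
    (Matrix.GeneralLinearGroup.det : GL (Fin 2) (ZMod p) →* (ZMod p)ˣ) := by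
  intro u
  refine ⟨diagGL p u, ?_⟩
  apply Units.ext
  show Matrix.det (Matrix.diagonal ![(u : ZMod p), 1]) = u
  rw [Matrix.det_diagonal, Fin.prod_univ_two, Matrix.cons_val_zero, Matrix.cons_val_one,
    Matrix.cons_val_zero, mul_one]

/-- `SL(2,p)` is equivalent to the kernel of the determinant on `GL(2,p)`. -/
def slEquivKer : SL2 p ≃
    (Matrix.GeneralLinearGroup.det : GL (Fin 2) (ZMod p) →* (ZMod p)ˣ).ker where
  toFun A := ⟨Matrix.SpecialLinearGroup.toGL A, by
    rw [MonoidHom.mem_ker]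
    exact Matrix.SpecialLinearGroup.coeToGL_det A⟩
  invFun g := ⟨(g : GL (Fin 2) (ZMod p)).val, by
    have h := MonoidHom.mem_ker.mp g.2
    exact congrArg Units.val h⟩
  left_inv A := rfl
  right_inv g := by
    apply Subtype.ext
    apply Units.ext
    rfl

end Stmt12Aux

namespace Stmt12Aux

variable (p : ℕ) [Fact p.Prime]

lemma card_SL : Nat.card (SL2 p) = (p ^ 2 - 1) * p := by
  set D := (Matrix.GeneralLinearGroup.det : GL (Fin 2) (ZMod p) →* (ZMod p)ˣ) with hD
  have hGL : Nat.card (GL (Fin 2) (ZMod p)) = (p ^ 2 - 1) * (p ^ 2 - p) := by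
    rw [Matrix.card_GL_field, Fin.prod_univ_two, ZMod.card]
    norm_num
  have hker : Nat.card (MonoidHom.ker D) = Nat.card (SL2 p) :=
    Nat.card_congr (slEquivKer p).symm
  have hq : Nat.card (GL (Fin 2) (ZMod p))
      = Nat.card (GL (Fin 2) (ZMod p) ⧸ MonoidHom.ker D) * Nat.card (MonoidHom.ker D) :=
    Subgroup.card_eq_card_quotient_mul_card_subgroup _
  have hquot : Nat.card (GL (Fin 2) (ZMod p) ⧸ MonoidHom.ker D) = Nat.card (ZMod p)ˣ :=
    Nat.card_congr (QuotientGroup.quotientKerEquivOfSurjective D (det_surj p)).toEquiv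
  have hu : Nat.card (ZMod p)ˣ = p - 1 := by
    rw [Nat.card_eq_fintype_card, ZMod.card_units]
  rw [hGL, hquot, hu, hker] at hq
  have hp2 : 2 ≤ p := (Fact.out : p.Prime).two_le
  have e1 : p ^ 2 - p = p * (p - 1) := by
    have h := Nat.mul_sub p p 1
    rw [mul_one] at h
    rw [pow_two, h]
  have e2 : (p ^ 2 - 1) * (p ^ 2 - p) = (p - 1) * ((p ^ 2 - 1) * p) := by
    rw [e1]; ring
  rw [e2] at hq
  exact (Nat.eq_of_mul_eq_mul_left (by omega) hq.symm)

lemma card_range_phi (hp2 : p ≠ 2) : Nat.card ((phi p).range) * 2 = p - 1 := by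
  have h := Subgroup.card_eq_card_quotient_mul_card_subgroup ((phi p).ker)
  have hquot : Nat.card ((ZMod p)ˣ ⧸ (phi p).ker) = Nat.card ((phi p).range) :=
    Nat.card_congr (QuotientGroup.quotientKerEquivRange (phi p)).toEquiv
  rw [hquot, card_ker_phi p hp2] at h
  rw [← h, Nat.card_eq_fintype_card, ZMod.card_units]

instance : IsCyclic ((phi p).range) :=
  isCyclic_of_surjective (phi p).rangeRestrict (MonoidHom.rangeRestrict_surjective _)

lemma mem_zpowers_of_orderOf_eq {G : Type*} [Group G] [Finite G] [IsCyclic G] {q : ℕ}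
    (hq : q.Prime) {a b : G} (ha : orderOf a = q) (hb : orderOf b = q) :
    a ∈ Subgroup.zpowers b := by
  classical
  have _inst := Fintype.ofFinite G
  set S := Finset.univ.filter (fun z : G => z ^ q = 1) with hS
  have hScard : S.card ≤ q := IsCyclic.card_pow_eq_one_le hq.pos
  set Zb := Finset.univ.filter (fun z : G => z ∈ Subgroup.zpowers b) with hZb
  have hbq : b ^ q = 1 := hb ▸ pow_orderOf_eq_one b
  have hsub : Zb ⊆ S := by
    intro z hz
    simp only [hZb, hS, Finset.mem_filter, Finset.mem_univ, true_and] at hz ⊢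
    obtain ⟨k, rfl⟩ := hz
    rw [← zpow_natCast (b ^ k) q, ← zpow_mul, mul_comm, zpow_mul, zpow_natCast, hbq, one_zpow]
  have hZbcard : Zb.card = q := by
    have h1 : Nat.card (Subgroup.zpowers b) = q := by rw [Nat.card_zpowers, hb]
    rw [Nat.card_eq_fintype_card] at h1
    rw [← h1, Fintype.card_subtype]
  have heq : S = Zb := (Finset.eq_of_subset_of_card_le hsub (by omega)).symm
  have haS : a ∈ S := by
    simp only [hS, Finset.mem_filter, Finset.mem_univ, true_and]
    rw [← ha]
    exact pow_orderOf_eq_one a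
  rw [heq] at haS
  simpa only [hZb, Finset.mem_filter, Finset.mem_univ, true_and] using haS

lemma conj_into_sylow {G : Type*} [Group G] [Finite G] {q : ℕ} [Fact q.Prime]
    (Q : Sylow q G) (x : G) (hx : orderOf x = q) :
    ∃ g : G, g * x * g⁻¹ ∈ (Q : Subgroup G) := by
  have hpg : IsPGroup q (Subgroup.zpowers x) :=
    IsPGroup.of_card (by rw [Nat.card_zpowers, hx, pow_one])
  obtain ⟨Q₁, hQ₁⟩ := hpg.exists_le_sylow
  obtain ⟨g, hg⟩ := MulAction.exists_smul_eq G Q₁ Q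
  refine ⟨g, ?_⟩
  have hxQ : x ∈ Q₁ := hQ₁ (Subgroup.mem_zpowers x)
  have h2 : MulAut.conj g • x ∈ MulAut.conj g • (Q₁ : Subgroup G) :=
    Subgroup.smul_mem_pointwise_smul _ _ _ hxQ
  have h3 : (MulAut.conj g • (Q₁ : Subgroup G)) = ((g • Q₁ : Sylow q G) : Subgroup G) := by
    rw [Sylow.smul_def, Sylow.pointwise_smul_def]
  rw [h3, hg] at h2
  simpa using h2

end Stmt12Aux


open Stmt12Aux

/-- For a Mersenne prime `p` and a subgroup `H` of `T = PSL(2, p)` with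
`C_p ⋊ C_r ≤ H ≤ C_p ⋊ C_{(p-1)/2}` (encoded as: `H` contains a Sylow
`p`-subgroup `P`, is contained in the Borel subgroup `N_T(P) = C_p ⋊ C_{(p-1)/2}`,
and `|H|` is divisible by every prime divisor of `(p-1)/2`), the subgroup `H`
meets every conjugacy class of elements of odd prime order in `T`; equivalently,
`T` has no derangement of odd prime order on the cosets of `H`. -/
theorem stmt_12 (p : ℕ) [Fact p.Prime] (hmersenne : ∃ n : ℕ, p = 2 ^ n - 1)
    (P : Sylow p (Matrix.ProjectiveSpecialLinearGroup (Fin 2) (ZMod p)))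
    (H : Subgroup (Matrix.ProjectiveSpecialLinearGroup (Fin 2) (ZMod p)))
    (hPH : (P : Subgroup (Matrix.ProjectiveSpecialLinearGroup (Fin 2) (ZMod p))) ≤ H)
    (hHB : H ≤ Subgroup.normalizer (P : Subgroup (Matrix.ProjectiveSpecialLinearGroup (Fin 2) (ZMod p))))
    (hdiv : ∀ q : ℕ, q.Prime → q ∣ (p - 1) / 2 → q ∣ Nat.card H) :
    ∀ x : Matrix.ProjectiveSpecialLinearGroup (Fin 2) (ZMod p),
      ∀ q : ℕ, q.Prime → Odd q → orderOf x = q →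
        ∃ g : Matrix.ProjectiveSpecialLinearGroup (Fin 2) (ZMod p),
          g * x * g⁻¹ ∈ H := by
  intro x q hq hodd hx
  haveI : Fact q.Prime := ⟨hq⟩
  obtain ⟨n, hn⟩ := hmersenne
  have hp : p.Prime := Fact.out
  have htn : 1 ≤ 2 ^ n := Nat.one_le_two_pow
  have hp2 : p ≠ 2 := by
    rintro rfl
    have h3 : 2 ^ n = 3 := by omega
    have hn0 : n ≠ 0 := by rintro rfl; simp at h3
    have h2 : (2 : ℕ) ∣ 2 ^ n := dvd_pow_self 2 hn0
    omega
  have hq2 : q ≠ 2 := by rintro rfl; exact (by decide : ¬ Odd 2) hodd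
  by_cases hqp : q = p
  · subst hqp
    obtain ⟨g, hg⟩ := conj_into_sylow P x hx
    exact ⟨g, hPH hg⟩
  -- now q ≠ p, q odd; show q ∣ m
  have hpodd : p % 2 = 1 := Nat.odd_iff.mp (hp.odd_of_ne_two hp2)
  have hp3 : 3 ≤ p := by
    have := hp.two_le; omega
  set m := (p - 1) / 2 with hm_def
  have hm : p - 1 = 2 * m := by omega
  have h2n : p + 1 = 2 ^ n := by omega
  have hm1 : 1 ≤ m := by omega
  have hNT : Nat.card (PSL(2, ZMod p)) * 2 = (p ^ 2 - 1) * p := by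
    rw [← card_SL p, card_psl_mul p hp2]
  have hfact : p ^ 2 - 1 = (p + 1) * (p - 1) := by
    have h := Nat.sq_sub_sq p 1
    simpa using h
  have hN : Nat.card (PSL(2, ZMod p)) = m * (2 ^ n * p) := by
    have h1 : (p ^ 2 - 1) * p = (m * (2 ^ n * p)) * 2 := by
      rw [hfact, ← h2n, hm]; ring
    rw [h1] at hNT
    exact Nat.eq_of_mul_eq_mul_right (by norm_num) hNT
  have hqm : q ∣ m := by
    have hqN : q ∣ Nat.card (PSL(2, ZMod p)) := hx ▸ orderOf_dvd_natCard x
    rw [hN] at hqN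
    rcases (Nat.Prime.dvd_mul hq).mp hqN with h | h
    · exact h
    · rcases (Nat.Prime.dvd_mul hq).mp h with h' | h'
      · exact absurd ((Nat.prime_dvd_prime_iff_eq hq Nat.prime_two).mp
          (hq.dvd_of_dvd_pow h')) hq2
      · exact absurd ((Nat.prime_dvd_prime_iff_eq hq hp).mp h') hqp
  -- Cauchy: get y in H of order q
  have hqH : q ∣ Nat.card H := hdiv q hq hqm
  have _inst := Fintype.ofFinite H
  obtain ⟨y', hy'⟩ := exists_prime_orderOf_dvd_card (G := ↥H) q
    (by rw [← Nat.card_eq_fintype_card]; exact hqH)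
  have hyq : orderOf ((y' : PSL(2, ZMod p))) = q := by
    rw [Subgroup.orderOf_coe, hy']
  -- the cyclic torus C
  set C := (phi p).range with hC_def
  have hCcard : Nat.card C = m := by
    have h := card_range_phi p hp2
    rw [← hC_def] at h
    omega
  -- valuation of q in card T equals that in m
  have hvq : (Nat.card (PSL(2, ZMod p))).factorization q = m.factorization q := by
    rw [hN, Nat.factorization_mul (by omega) (by positivity)]
    have h0 : (2 ^ n * p).factorization q = 0 := by
      apply Nat.factorization_eq_zero_of_not_dvd
      intro hdvd
      rcases (Nat.Prime.dvd_mul hq).mp hdvd with h' | h'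
      · exact absurd ((Nat.prime_dvd_prime_iff_eq hq Nat.prime_two).mp
          (hq.dvd_of_dvd_pow h')) hq2
      · exact absurd ((Nat.prime_dvd_prime_iff_eq hq hp).mp h') hqp
    simp [h0]
  -- Sylow q-subgroup of C is a Sylow q-subgroup of T
  obtain ⟨Q_C⟩ : Nonempty (Sylow q C) := inferInstance
  have hQC : Nat.card (Q_C : Subgroup C) = q ^ (Nat.card C).factorization q :=
    Q_C.card_eq_multiplicity
  set K := Subgroup.map C.subtype (Q_C : Subgroup C) with hK_def
  have hKcard : Nat.card K = q ^ ((Nat.card (PSL(2, ZMod p))).factorization q) := by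
    have h1 : Nat.card K = Nat.card (Q_C : Subgroup C) :=
      (Nat.card_congr ((Q_C : Subgroup C).equivMapOfInjective C.subtype
        C.subtype_injective).toEquiv).symm
    rw [h1, hQC, hCcard, hvq]
  set QT : Sylow q (PSL(2, ZMod p)) := Sylow.ofCard K hKcard with hQT_def
  have hQTle : (QT : Subgroup (PSL(2, ZMod p))) ≤ C := by
    have : (QT : Subgroup (PSL(2, ZMod p))) = K := Sylow.coe_ofCard K hKcard
    rw [this, hK_def]
    exact Subgroup.map_subtype_le _
  obtain ⟨g, hg⟩ := conj_into_sylow QT x hx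
  obtain ⟨h, hh⟩ := conj_into_sylow QT (y' : PSL(2, ZMod p)) hyq
  set a : C := ⟨g * x * g⁻¹, hQTle hg⟩ with ha_def
  set b : C := ⟨h * (y' : PSL(2, ZMod p)) * h⁻¹, hQTle hh⟩ with hb_def
  have horder_conj : ∀ (g z : PSL(2, ZMod p)), orderOf (g * z * g⁻¹) = orderOf z := by
    intro g z
    have h := orderOf_injective (MulAut.conj g).toMonoidHom (MulEquiv.injective _) z
    simpa [MulAut.conj_apply] using h
  have haq : orderOf a = q := by
    rw [← Subgroup.orderOf_coe]
    show orderOf (g * x * g⁻¹) = q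
    rw [horder_conj, hx]
  have hbq : orderOf b = q := by
    rw [← Subgroup.orderOf_coe]
    show orderOf (h * (y' : PSL(2, ZMod p)) * h⁻¹) = q
    rw [horder_conj, hyq]
  have hab : a ∈ Subgroup.zpowers b := mem_zpowers_of_orderOf_eq hq haq hbq
  obtain ⟨k, hk⟩ := Subgroup.mem_zpowers_iff.mp hab
  have hk' : (h * (y' : PSL(2, ZMod p)) * h⁻¹) ^ k = g * x * g⁻¹ := by
    have := congrArg (Subtype.val : C → PSL(2, ZMod p)) hk
    simpa [ha_def, hb_def] using this
  rw [conj_zpow] at hk'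
  refine ⟨h⁻¹ * g, ?_⟩
  have hfinal : (h⁻¹ * g) * x * (h⁻¹ * g)⁻¹ = (y' : PSL(2, ZMod p)) ^ k := by
    have h2 : (y' : PSL(2, ZMod p)) ^ k = h⁻¹ * (g * x * g⁻¹) * h := by
      rw [← hk']; group
    rw [h2]; group
  rw [hfinal]
  exact H.zpow_mem y'.2 k
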